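/- The fan symmetries a = (2 3 4) and b = (3 4)(5 6) of V_{(2,29)} are realized by torus actions: for all λ1,…,λ7 ∈ ℂ* and all μ, ν ∈ ℂ* with μ³ = λ2 λ3 λ4⁻² and ν³ = λ3² λ4⁻² λ5⁻¹ λ6, one has, for every t = (t1,t2,t3,t4) ∈ (ℂ*)⁴: f(λ1,…,λ7; t1, λ2⁻¹λ3 t2, λ3⁻¹λ4 t3, μ t4) = f(λ1, λ3, λ4, λ2, λ5, λ6, λ7; t1, t2, t3, t4), and f(λ1,…,λ7; t1, t2, λ3⁻¹λ4 t3, ν t4) = f(λ1, λ2, λ4, λ3, λ6, λ5, λ7; t1, t2, t3, t4). In particular a and b act trivially on the simplified moduli space. -/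

import Mathlib

/-- The generic anticanonical Laurent polynomial of the family `V_{(2,29)}`:
`f(λ; t) = λ1 t1 + λ2 t2 + λ3 t3 + λ4 t2⁻¹ t3⁻¹ + λ5 t1 t2 t3² t4³
          + λ6 t1⁻² t2⁻¹ t3⁻² t4⁻³ + λ7`. -/
noncomputable def anticanPoly (lam : Fin 7 → ℂ) (t : Fin 4 → ℂ) : ℂ :=
  lam 0 * t 0 + lam 1 * t 1 + lam 2 * t 2 + lam 3 * (t 1)⁻¹ * (t 2)⁻¹ +
    lam 4 * t 0 * t 1 * (t 2)^2 * (t 3)^3 +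
    lam 5 * ((t 0)^2)⁻¹ * (t 1)⁻¹ * ((t 2)^2)⁻¹ * ((t 3)^3)⁻¹ + lam 6

private lemma add7_congr {a1 a2 a3 a4 a5 a6 a7 b1 b2 b3 b4 b5 b6 b7 : ℂ}
    (e1 : a1 = b1) (e2 : a2 = b2) (e3 : a3 = b3) (e4 : a4 = b4)
    (e5 : a5 = b5) (e6 : a6 = b6) (e7 : a7 = b7) :
    a1 + a2 + a3 + a4 + a5 + a6 + a7 = b1 + b2 + b3 + b4 + b5 + b6 + b7 := by
  rw [e1, e2, e3, e4, e5, e6, e7]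

set_option maxHeartbeats 1000000 in
/-- The fan symmetries `a = (2 3 4)` and `b = (3 4)(5 6)` of `V_{(2,29)}` are realized
by torus actions; in particular they act trivially on the simplified moduli space. -/
theorem V229_fan_symmetries_are_torus_actions
    (l1 l2 l3 l4 l5 l6 l7 μ ν : ℂ)
    (h1 : l1 ≠ 0) (h2 : l2 ≠ 0) (h3 : l3 ≠ 0) (h4 : l4 ≠ 0)
    (h5 : l5 ≠ 0) (h6 : l6 ≠ 0) (h7 : l7 ≠ 0) (hμ : μ ≠ 0) (hν : ν ≠ 0)
    (hμ3 : μ^3 = l2 * l3 * (l4^2)⁻¹)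
    (hν3 : ν^3 = l3^2 * (l4^2)⁻¹ * l5⁻¹ * l6) :
    ∀ t : Fin 4 → ℂ, (∀ i, t i ≠ 0) →
      anticanPoly ![l1, l2, l3, l4, l5, l6, l7]
          ![t 0, l2⁻¹ * l3 * t 1, l3⁻¹ * l4 * t 2, μ * t 3]
        = anticanPoly ![l1, l3, l4, l2, l5, l6, l7] ![t 0, t 1, t 2, t 3] ∧
      anticanPoly ![l1, l2, l3, l4, l5, l6, l7]
          ![t 0, t 1, l3⁻¹ * l4 * t 2, ν * t 3]
        = anticanPoly ![l1, l2, l4, l3, l6, l5, l7] ![t 0, t 1, t 2, t 3] := by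
  intro t ht
  have ht0 := ht 0
  have ht1 := ht 1
  have ht2 := ht 2
  have ht3 := ht 3
  constructor <;>
  · simp only [anticanPoly, Matrix.cons_val_zero, Matrix.cons_val_one, Matrix.head_cons,
      show ∀ a b c d e f g : ℂ, (![a,b,c,d,e,f,g] : Fin 7 → ℂ) 2 = c from fun _ _ _ _ _ _ _ => rfl,
      show ∀ a b c d e f g : ℂ, (![a,b,c,d,e,f,g] : Fin 7 → ℂ) 3 = d from fun _ _ _ _ _ _ _ => rfl,
      show ∀ a b c d e f g : ℂ, (![a,b,c,d,e,f,g] : Fin 7 → ℂ) 4 = e from fun _ _ _ _ _ _ _ => rfl,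
      show ∀ a b c d e f g : ℂ, (![a,b,c,d,e,f,g] : Fin 7 → ℂ) 5 = f from fun _ _ _ _ _ _ _ => rfl,
      show ∀ a b c d e f g : ℂ, (![a,b,c,d,e,f,g] : Fin 7 → ℂ) 6 = g from fun _ _ _ _ _ _ _ => rfl,
      show ∀ a b c d : ℂ, (![a,b,c,d] : Fin 4 → ℂ) 2 = c from fun _ _ _ _ => rfl,
      show ∀ a b c d : ℂ, (![a,b,c,d] : Fin 4 → ℂ) 3 = d from fun _ _ _ _ => rfl,
      mul_pow]
    simp only [hμ3, hν3, mul_inv, inv_inv, inv_pow, mul_pow]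
    refine add7_congr ?_ ?_ ?_ ?_ ?_ ?_ ?_
    · rfl
    · field_simp
    · field_simp
    · field_simp <;> ring
    · field_simp <;> ring
    · field_simp
    · rfl
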